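/- Let G be a non-abelian 2-group that is the product G = AB where A is a quasicyclic 2-group (Prüfer 2-group) and B = ⟨b⟩ is cyclic, with A normal in G. Then the automorphism induced by b on A inverts every element of A, i.e., a^b = a^{-1} for all a ∈ A. -/
import Mathlib

/-- A group is locally cyclic if every finitely generated subgroup is cyclic. -/
def IsLocallyCyclic (G : Type*) [Group G] : Prop :=
  ∀ H : Subgroup G, H.FG → IsCyclic H

/-- A quasicyclic (Prüfer) `p`-group: an infinite locally cyclic `p`-group. -/
def IsQuasicyclic (p : ℕ) (G : Type*) [Group G] : Prop :=
  IsPGroup p G ∧ Infinite G ∧ IsLocallyCyclic G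

private lemma nt_aux (m : ℕ) : ∀ (s : ℕ) (u : ℤ), Odd u → (2:ℤ)^s ∣ u^(2^m) - 1 →
    (2:ℤ)^(s-m) ∣ u - 1 ∨ (2:ℤ)^(s-m) ∣ u + 1 := by
  induction m with
  | zero => intro s u _ h; simpa using Or.inl h
  | succ m ih =>
    intro s u hu h
    rcases le_or_gt s (m+1) with hs | hs
    · left
      have : s - (m+1) = 0 := Nat.sub_eq_zero_of_le hs
      simp [this]
    have h2 : (2:ℤ)^s ∣ (u^2)^(2^m) - 1 := by
      rw [← pow_mul, ← pow_succ']
      exact h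
    have hu2 : Odd (u^2) := hu.pow
    have hsm2 : 2 ≤ s - m := by omega
    rcases ih s (u^2) hu2 h2 with h3 | h3
    · have h4 : (2:ℤ)^(s-m) ∣ (u-1)*(u+1) := by
        have : (u-1)*(u+1) = u^2 - 1 := by ring
        rw [this]; exact h3
      obtain ⟨k, hk⟩ := hu
      have key : ∀ v w : ℤ, Odd v → (u-1)*(u+1) = 2*(v*w) → (2:ℤ)^(s-(m+1)) ∣ w := by
        intro v w hv hvw
        have h5 : (2:ℤ)^(s-m-1) ∣ v * w := by
          have h6 : (2:ℤ) * 2^(s-m-1) ∣ 2 * (v * w) := by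
            rw [← hvw, ← pow_succ']
            have : s - m - 1 + 1 = s - m := by omega
            rw [this]; exact h4
          exact (mul_dvd_mul_iff_left (by norm_num : (2:ℤ) ≠ 0)).mp h6
        have hcop : IsCoprime ((2:ℤ)^(s-m-1)) v := by
          exact (IsCoprime.pow_left ((Int.prime_two.coprime_iff_not_dvd).mpr
            (Int.two_dvd_ne_zero.mpr (Int.odd_iff.mp hv))))
        have : s - (m+1) = s - m - 1 := by omega
        rw [this]
        exact hcop.dvd_of_dvd_mul_left h5
      rcases Int.even_or_odd k with ⟨j, hj⟩ | ⟨j, hj⟩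
      · left
        exact key (2*j+1) (u-1) ⟨j, by ring⟩ (by rw [hk, hj]; ring)
      · right
        exact key (2*j+1) (u+1) ⟨j, by ring⟩ (by rw [hk, hj]; ring)
    · exfalso
      have h4 : (4:ℤ) ∣ u^2 + 1 := by
        calc (4:ℤ) = 2^2 := by norm_num
        _ ∣ 2^(s-m) := pow_dvd_pow 2 hsm2
        _ ∣ u^2 + 1 := h3
      obtain ⟨k, hk⟩ := hu
      obtain ⟨c, hc⟩ := h4
      have : u^2 = 4*k^2+4*k+1 := by rw [hk]; ring
      omega

private lemma exists_zpowers_of_finite {G : Type*} [Group G] (hLC : IsLocallyCyclic G)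
    (S : Set G) (hS : S.Finite) : ∃ g : G, ∀ x ∈ S, x ∈ Subgroup.zpowers g := by
  have hFG : (Subgroup.closure S).FG := (Subgroup.fg_iff _).mpr ⟨S, rfl, hS⟩
  haveI := hLC _ hFG
  obtain ⟨gen, hgen⟩ := IsCyclic.exists_generator (α := ↥(Subgroup.closure S))
  refine ⟨(gen : G), fun x hx => ?_⟩
  obtain ⟨k, hk⟩ := hgen ⟨x, Subgroup.subset_closure hx⟩
  refine ⟨k, ?_⟩
  show ((gen : G)) ^ k = x
  rw [← SubgroupClass.coe_zpow]
  exact congrArg Subtype.val hk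

private lemma exists_order_of_two_pow {G : Type*} [Group G] (hp : IsPGroup 2 G) (x : G) :
    ∃ k : ℕ, orderOf x = 2 ^ k := by
  obtain ⟨n, hn⟩ := hp x
  have hd : orderOf x ∣ 2 ^ n := orderOf_dvd_of_pow_eq_one hn
  obtain ⟨k, _, hk⟩ := (Nat.dvd_prime_pow Nat.prime_two).mp hd
  exact ⟨k, hk⟩

private lemma exists_large_order {G : Type*} [Group G] (hp : IsPGroup 2 G) [Infinite G]
    (hLC : IsLocallyCyclic G) (N : ℕ) : ∃ d : G, 2 ^ N ≤ orderOf d := by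
  by_contra hc
  push_neg at hc
  have hpos : ∀ x : G, 0 < orderOf x := by
    intro x
    obtain ⟨k, hk⟩ := exists_order_of_two_pow hp x
    rw [hk]; positivity
  -- take element of maximal order
  set S : Set ℕ := Set.range (orderOf : G → ℕ) with hSdef
  have hbdd : BddAbove S := ⟨2^N, by rintro _ ⟨x, rfl⟩; exact (hc x).le⟩
  have hne : S.Nonempty := ⟨orderOf (1 : G), 1, rfl⟩
  have hmem : sSup S ∈ S := Nat.sSup_mem hne hbdd
  obtain ⟨d0, hd0⟩ := hmem
  have hmax : ∀ x : G, orderOf x ≤ orderOf d0 := by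
    intro x; rw [hd0]; exact le_csSup hbdd ⟨x, rfl⟩
  have htop : ∀ x : G, x ∈ Subgroup.zpowers d0 := by
    intro x
    obtain ⟨g, hg⟩ := exists_zpowers_of_finite hLC {d0, x} ((Set.finite_singleton _).insert _)
    have hd0g : d0 ∈ Subgroup.zpowers g := hg d0 (by simp)
    have hxg : x ∈ Subgroup.zpowers g := hg x (by simp)
    have h1 : orderOf d0 ∣ orderOf g := orderOf_dvd_of_mem_zpowers hd0g
    have h2 : orderOf g = orderOf d0 :=
      le_antisymm (hmax g) (Nat.le_of_dvd (hpos g) h1)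
    haveI : Finite (Subgroup.zpowers g) :=
      Nat.finite_of_card_ne_zero (by rw [Nat.card_zpowers, h2]; exact (hpos d0).ne')
    have heq : Subgroup.zpowers d0 = Subgroup.zpowers g := by
      apply Subgroup.eq_of_le_of_card_ge (Subgroup.zpowers_le.mpr hd0g)
      rw [Nat.card_zpowers, Nat.card_zpowers, h2]
    rw [heq]; exact hxg
  have : (⊤ : Subgroup G) = Subgroup.zpowers d0 := by
    ext x; simp [htop x]
  have hcard : Nat.card G = orderOf d0 := by
    rw [← Nat.card_zpowers, ← this]
    exact (Nat.card_congr Subgroup.topEquiv.toEquiv).symm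
  rw [Nat.card_eq_zero_of_infinite] at hcard
  exact (hpos d0).ne' hcard.symm

/-- If a non-abelian `2`-group `G` is the product of a normal quasicyclic `2`-subgroup `A`
and a cyclic subgroup `⟨b⟩`, then `b` inverts every element of `A`. -/
theorem inverting_automorphism_on_quasicyclic {G : Type*} [Group G]
    (hG : IsPGroup 2 G) (hna : ¬ ∀ x y : G, x * y = y * x)
    (A : Subgroup G) (hAn : A.Normal) (hA : IsQuasicyclic 2 A) (b : G)
    (hprod : ∀ g : G, ∃ a ∈ A, ∃ k : ℤ, g = a * b ^ k) :
    ∀ a ∈ A, b⁻¹ * a * b = a⁻¹ := by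
  obtain ⟨hApg, hAinf, hALC⟩ := hA
  haveI := hAinf
  -- the conjugation homomorphism on A
  have hmem : ∀ x : ↥A, b⁻¹ * (x : G) * b ∈ A := by
    intro x
    simpa using hAn.conj_mem x.1 x.2 b⁻¹
  let Φ : ↥A →* ↥A :=
    { toFun := fun x => ⟨b⁻¹ * (x : G) * b, hmem x⟩
      map_one' := by ext; simp
      map_mul' := by intro x y; ext; push_cast; group }
  have hΦcoe : ∀ x : ↥A, (Φ x : G) = b⁻¹ * (x : G) * b := fun x => rfl
  obtain ⟨m, hbm⟩ := hG b
  -- iterates of Φ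
  have hiter : ∀ (i : ℕ) (x : ↥A), ((Φ^[i] x : ↥A) : G) = (b ^ i)⁻¹ * (x : G) * b ^ i := by
    intro i
    induction i with
    | zero => intro x; simp
    | succ i ih =>
      intro x
      rw [Function.iterate_succ_apply', hΦcoe, ih, pow_succ]
      group
  have hper : ∀ x : ↥A, Φ^[2^m] x = x := by
    intro x
    apply Subtype.ext
    rw [hiter, hbm]
    group
  -- existence of a noncommuting element of A
  have hex : ∃ a0, ∃ ha0 : a0 ∈ A, b⁻¹ * a0 * b ≠ a0 := by
    by_contra hcon
    push_neg at hcon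
    have hcomm : ∀ a ∈ A, Commute b a := by
      intro a ha
      have h := hcon a ha
      show b * a = a * b
      calc b * a = b * (b⁻¹ * a * b) := by rw [h]
        _ = a * b := by group
    have habel : ∀ x ∈ A, ∀ y ∈ A, x * y = y * x := by
      intro x hx y hy
      obtain ⟨g, hg⟩ := exists_zpowers_of_finite hALC {(⟨x, hx⟩ : ↥A), ⟨y, hy⟩}
        ((Set.finite_singleton _).insert _)
      obtain ⟨i, hi⟩ := hg _ (by simp : (⟨x, hx⟩ : ↥A) ∈ _)
      obtain ⟨j, hj⟩ := hg _ (by simp : (⟨y, hy⟩ : ↥A) ∈ _)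
      have hx' : x = ((g ^ i : ↥A) : G) := (congrArg Subtype.val hi).symm
      have hy' : y = ((g ^ j : ↥A) : G) := (congrArg Subtype.val hj).symm
      rw [hx', hy']
      push_cast
      rw [← zpow_add, ← zpow_add, add_comm]
    apply hna
    intro x y
    obtain ⟨a1, ha1, k1, rfl⟩ := hprod x
    obtain ⟨a2, ha2, k2, rfl⟩ := hprod y
    have c1 : b ^ k1 * a2 = a2 * b ^ k1 := ((hcomm a2 ha2).zpow_left k1).eq
    have c2 : b ^ k2 * a1 = a1 * b ^ k2 := ((hcomm a1 ha1).zpow_left k2).eq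
    calc a1 * b ^ k1 * (a2 * b ^ k2) = a1 * (b ^ k1 * a2) * b ^ k2 := by group
      _ = a1 * (a2 * b ^ k1) * b ^ k2 := by rw [c1]
      _ = (a1 * a2) * (b ^ k1 * b ^ k2) := by group
      _ = (a2 * a1) * (b ^ k2 * b ^ k1) := by
          rw [habel a1 ha1 a2 ha2, ← zpow_add, ← zpow_add, add_comm]
      _ = a2 * (b ^ k2 * a1) * b ^ k1 := by rw [c2]; group
      _ = a2 * b ^ k2 * (a1 * b ^ k1) := by group
  obtain ⟨a0, ha0, hne⟩ := hex
  -- the invariant-cyclic-subgroup lemma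
  have hinv : ∀ x1 x2 x3 : ↥A, ∃ (g : ↥A) (u : ℤ),
      x1 ∈ Subgroup.zpowers g ∧ x2 ∈ Subgroup.zpowers g ∧ x3 ∈ Subgroup.zpowers g ∧
      Φ g = g ^ u := by
    intro x1 x2 x3
    set S : Set ↥A := ⋃ i ∈ Finset.range (2^m), ({Φ^[i] x1, Φ^[i] x2, Φ^[i] x3} : Set ↥A)
      with hSdef
    have hSfin : S.Finite := Set.Finite.biUnion (Finset.finite_toSet _)
      (fun i _ => (Set.finite_singleton _).insert _ |>.insert _)
    have hSinv : ∀ x ∈ S, Φ x ∈ S := by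
      intro x hx
      simp only [hSdef, Set.mem_iUnion, Finset.mem_range, Set.mem_insert_iff,
        Set.mem_singleton_iff] at hx ⊢
      obtain ⟨i, hi, hcase⟩ := hx
      rcases Nat.lt_or_ge (i+1) (2^m) with hi1 | hi1
      · refine ⟨i+1, hi1, ?_⟩
        rcases hcase with h | h | h <;> rw [h, ← Function.iterate_succ_apply' Φ i] <;> tauto
      · have hieq : i + 1 = 2^m := by omega
        refine ⟨0, by positivity, ?_⟩
        have key : ∀ z : ↥A, Φ (Φ^[i] z) = z := by
          intro z
          have h1 : Φ (Φ^[i] z) = Φ^[i+1] z := (Function.iterate_succ_apply' Φ i z).symm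
          rw [h1, hieq]
          exact hper z
        rcases hcase with h | h | h <;> rw [h, key] <;> simp
    set H : Subgroup ↥A := Subgroup.closure S with hHdef
    have hHinv : ∀ x ∈ H, Φ x ∈ H := by
      intro x hx
      induction hx using Subgroup.closure_induction with
      | mem y hy => exact Subgroup.subset_closure (hSinv y hy)
      | one => simpa using H.one_mem
      | mul y z _ _ hy hz => rw [map_mul]; exact H.mul_mem hy hz
      | inv y _ hy => rw [map_inv]; exact H.inv_mem hy
    have hFG : H.FG := (Subgroup.fg_iff _).mpr ⟨S, rfl, hSfin⟩
    haveI := hALC _ hFG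
    obtain ⟨gen, hgen⟩ := IsCyclic.exists_generator (α := ↥H)
    have hHz : ∀ y, ∀ hy : y ∈ H, y ∈ Subgroup.zpowers ((gen : ↥A)) := by
      intro y hy
      obtain ⟨k, hk⟩ := hgen ⟨y, hy⟩
      refine ⟨k, ?_⟩
      show ((gen : ↥A)) ^ k = y
      rw [← SubgroupClass.coe_zpow]
      exact congrArg Subtype.val hk
    have hmemS : ∀ x ∈ ({x1, x2, x3} : Set ↥A), x ∈ S := by
      intro x hx
      simp only [hSdef, Set.mem_iUnion, Finset.mem_range]
      exact ⟨0, by positivity, by simpa using hx⟩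
    have hΦgen : Φ (gen : ↥A) ∈ H := hHinv _ gen.2
    obtain ⟨u, hu⟩ := hHz _ hΦgen
    exact ⟨(gen : ↥A), u,
      hHz _ (Subgroup.subset_closure (hmemS x1 (by simp))),
      hHz _ (Subgroup.subset_closure (hmemS x2 (by simp))),
      hHz _ (Subgroup.subset_closure (hmemS x3 (by simp))), hu.symm⟩
  -- main argument
  intro a ha
  set a' : ↥A := ⟨a, ha⟩ with ha'def
  set a0' : ↥A := ⟨a0, ha0⟩ with ha0'def
  obtain ⟨r, hr⟩ := exists_order_of_two_pow hApg a'
  obtain ⟨r0, hr0⟩ := exists_order_of_two_pow hApg a0'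
  set N : ℕ := max r r0 + m + 1 with hNdef
  obtain ⟨d, hd⟩ := exists_large_order hApg hALC N
  obtain ⟨g, u, hag, ha0g, hdg, hgu⟩ := hinv a' a0' d
  obtain ⟨s, hs⟩ := exists_order_of_two_pow hApg g
  have hgpos : 0 < orderOf g := by rw [hs]; positivity
  have hNs : N ≤ s := by
    have h1 : orderOf d ∣ orderOf g := orderOf_dvd_of_mem_zpowers hdg
    have h2 : (2:ℕ)^N ≤ 2^s := by
      calc (2:ℕ)^N ≤ orderOf d := hd
        _ ≤ orderOf g := Nat.le_of_dvd hgpos h1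
        _ = 2^s := hs
    exact (pow_le_pow_iff_right₀ one_lt_two).mp h2
  -- Φ^[i] g = g ^ (u^i)
  have hΦpow : ∀ i : ℕ, Φ^[i] g = g ^ (u ^ i : ℤ) := by
    intro i
    induction i with
    | zero => simp
    | succ i ih =>
      rw [Function.iterate_succ_apply', ih, map_zpow, hgu, ← zpow_mul]
      congr 1
      rw [pow_succ]
      ring
  have hdvd : (2:ℤ)^s ∣ u ^ (2^m) - 1 := by
    have h1 : g ^ (u ^ (2^m) : ℤ) = g := by rw [← hΦpow, hper]
    have h2 : g ^ ((u ^ (2^m) : ℤ) - 1) = 1 := by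
      rw [zpow_sub, h1, zpow_one]
      group
    have h3 : (orderOf g : ℤ) ∣ (u ^ (2^m) : ℤ) - 1 := orderOf_dvd_iff_zpow_eq_one.mpr h2
    rw [hs] at h3
    exact_mod_cast h3
  have hodd : Odd u := by
    have h1 : (2:ℤ) ∣ u ^ (2^m) - 1 := by
      refine dvd_trans ?_ hdvd
      exact dvd_pow_self 2 (by omega : s ≠ 0)
    have h2 : Odd (u ^ (2^m)) := by
      obtain ⟨c, hc⟩ := h1
      exact ⟨c, by omega⟩
    exact (Int.odd_pow' (by positivity : (2:ℕ)^m ≠ 0)).mp h2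
  -- action on elements of the cyclic subgroup
  have hact : ∀ (x : ↥A) (ρ : ℕ), x ∈ Subgroup.zpowers g → orderOf x = 2^ρ → ρ ≤ s - m →
      ∀ ε : ℤ, (2:ℤ)^(s-m) ∣ u - ε → Φ x = x ^ ε := by
    intro x ρ hx hρ hρs ε hε
    obtain ⟨t, ht⟩ := hx
    have ht' : g ^ t = x := ht
    have h1 : Φ x = x ^ u := by
      rw [← ht', map_zpow, hgu, ← zpow_mul, ← zpow_mul]
      congr 1
      ring
    have h2 : x ^ (u - ε) = 1 := by
      apply orderOf_dvd_iff_zpow_eq_one.mp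
      rw [hρ]
      calc ((2^ρ : ℕ) : ℤ) = (2:ℤ)^ρ := by push_cast; ring
        _ ∣ (2:ℤ)^(s-m) := pow_dvd_pow 2 hρs
        _ ∣ u - ε := hε
    rw [h1]
    calc x ^ u = x ^ (ε + (u - ε)) := by congr 1; ring
      _ = x ^ ε * x ^ (u - ε) := zpow_add x ε (u - ε)
      _ = x ^ ε := by rw [h2, mul_one]
  rcases nt_aux m s u hodd hdvd with hcase | hcase
  · -- u ≡ 1 : contradiction with a0
    exfalso
    apply hne
    have h := hact a0' r0 ha0g hr0 (by omega) 1 hcase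
    rw [zpow_one] at h
    have h2 := congrArg Subtype.val h
    rw [hΦcoe] at h2
    exact h2
  · -- u ≡ -1 : conclusion
    have h := hact a' r hag hr (by omega) (-1) (by simpa using hcase)
    have h2 := congrArg Subtype.val h
    rw [hΦcoe] at h2
    have h3 : ((a' ^ (-1:ℤ) : ↥A) : G) = a⁻¹ := by
      rw [zpow_neg, zpow_one]
      rfl
    exact h2.trans h3
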